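/- Let G be a directed graph, let ρ₁ and ρ₂ be two distinct simple s-t-paths in G, and let w be any weight assignment on edges. If both ρ₁ and ρ₂ have minimum weight among all s-t-paths, then there exist nodes u and v and subpaths ρ₁^{uv} of ρ₁ and ρ₂^{uv} of ρ₂, both from u to v, that are internally disjoint (they share no node other than u and v) and distinct, and w(ρ₁^{uv}) = w(ρ₂^{uv}). -/

import Mathlib

variable {V : Type*}

/-- Sum of edge weights along a list of nodes. -/
def listWeight (w : V → V → ℤ) : List V → ℤ
  | a :: b :: l => w a b + listWeight w (b :: l)
  | _ => 0

/-- `l` is a (directed) path/walk from `s` to `t` along edge relation `E`. -/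
def IsPath (E : V → V → Prop) (l : List V) (s t : V) : Prop :=
  l ≠ [] ∧ l.head? = some s ∧ l.getLast? = some t ∧ l.Chain' E

lemma lw_append_cons (w : V → V → ℤ) : ∀ (l : List V) (x : V) (m : List V),
    listWeight w (l ++ x :: m) = listWeight w (l ++ [x]) + listWeight w (x :: m)
  | [], x, m => by simp [listWeight]
  | [a], x, m => by simp [listWeight]
  | a :: b :: l, x, m => by
    have h1 : listWeight w ((a :: b :: l) ++ x :: m)
        = w a b + listWeight w ((b :: l) ++ x :: m) := rfl
    have h2 : listWeight w ((a :: b :: l) ++ [x])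
        = w a b + listWeight w ((b :: l) ++ [x]) := rfl
    rw [h1, h2, lw_append_cons w (b :: l) x m]
    ring

lemma common_prefix : ∀ (m₁ : List V) (x : V) (m₂ : List V), m₁ ≠ m₂ →
    ∃ c u r₁ r₂, x :: m₁ = c ++ u :: r₁ ∧ x :: m₂ = c ++ u :: r₂ ∧ r₁.head? ≠ r₂.head?
  | [], x, m₂ => fun h => ⟨[], x, [], m₂, rfl, rfl, by
      cases m₂ with
      | nil => exact absurd rfl h
      | cons z m => simp⟩
  | y :: m₁', x, m₂ => fun h => by
    cases m₂ with
    | nil => exact ⟨[], x, y :: m₁', [], rfl, rfl, by simp⟩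
    | cons z m₂' =>
      by_cases hyz : y = z
      · subst hyz
        have hm : m₁' ≠ m₂' := fun hh => h (by rw [hh])
        obtain ⟨c, u, r₁, r₂, e1, e2, hne⟩ := common_prefix m₁' y m₂' hm
        exact ⟨x :: c, u, r₁, r₂, by rw [List.cons_append, ← e1],
          by rw [List.cons_append, ← e2], hne⟩
      · exact ⟨[], x, y :: m₁', z :: m₂', rfl, rfl, by simp [hyz]⟩

lemma first_common {r₂ : List V} : ∀ (r₁ : List V), (∃ y ∈ r₁, y ∈ r₂) →
    ∃ a v b, r₁ = a ++ v :: b ∧ v ∈ r₂ ∧ ∀ x ∈ a, x ∉ r₂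
  | [] => by simp
  | y :: r₁' => fun h => by
    by_cases hy : y ∈ r₂
    · exact ⟨[], y, r₁', rfl, hy, by simp⟩
    · obtain ⟨z, hz, hz2⟩ := h
      have hz' : z ∈ r₁' := by
        rcases List.mem_cons.1 hz with rfl | hh
        · exact absurd hz2 hy
        · exact hh
      obtain ⟨a, v, b, e, hv, ha⟩ := first_common r₁' ⟨z, hz', hz2⟩
      refine ⟨y :: a, v, b, by rw [e, List.cons_append], hv, fun x hx => ?_⟩
      rcases List.mem_cons.1 hx with rfl | hh
      · exact hy
      · exact ha x hh

lemma lw_decomp (w : V → V → ℤ) (c : List V) (u v : V) (b : List V) (X : List V) :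
    listWeight w (c ++ u :: (X ++ v :: b)) =
      listWeight w (c ++ [u]) + listWeight w (u :: (X ++ [v])) + listWeight w (v :: b) := by
  rw [lw_append_cons w c u (X ++ v :: b)]
  have h : u :: (X ++ v :: b) = (u :: X) ++ v :: b := rfl
  rw [h, lw_append_cons w (u :: X) v b]
  have h2 : u :: (X ++ [v]) = (u :: X) ++ [v] := rfl
  rw [h2]
  ring

lemma regroup (c : List V) (u v : V) (b : List V) (X : List V) :
    c ++ u :: (X ++ v :: b) = (c ++ (u :: (X ++ [v]))) ++ b := by
  simp

lemma last_decomp (c : List V) (u v : V) (b : List V) (X : List V) :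
    (c ++ u :: (X ++ v :: b)).getLast? = (v :: b).getLast? := by
  rw [List.getLast?_append_cons]
  show ((u :: X) ++ v :: b).getLast? = _
  rw [List.getLast?_append_cons]

lemma splice (E : V → V → Prop) (w : V → V → ℤ) {s t u v : V} (c a b d : List V)
    (hρ : IsPath E (c ++ u :: (a ++ v :: b)) s t)
    (hch : (u :: (d ++ [v])).Chain' E) :
    IsPath E (c ++ u :: (d ++ v :: b)) s t ∧
    listWeight w (c ++ u :: (d ++ v :: b)) + listWeight w (u :: (a ++ [v])) =
      listWeight w (c ++ u :: (a ++ v :: b)) + listWeight w (u :: (d ++ [v])) := by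
  obtain ⟨hne, hhead, hlast, hchain⟩ := hρ
  have hlastM : ∀ X : List V, (c ++ (u :: (X ++ [v]))).getLast? = some v := by
    intro X
    rw [List.getLast?_append_cons]
    show ((u :: X) ++ [v]).getLast? = some v
    exact List.getLast?_concat
  constructor
  · refine ⟨by simp, ?_, ?_, ?_⟩
    · rw [← hhead]; cases c <;> simp
    · rw [last_decomp] at hlast ⊢; exact hlast
    · rw [regroup] at hchain ⊢
      rw [List.Chain', List.isChain_append] at hchain ⊢
      obtain ⟨hcm, hb, hlink⟩ := hchain
      rw [List.isChain_append] at hcm ⊢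
      obtain ⟨hc, _, hlink2⟩ := hcm
      refine ⟨⟨hc, hch, ?_⟩, hb, ?_⟩
      · intro x hx y hy
        exact hlink2 x hx y (by simpa using hy)
      · intro x hx y hy
        rw [hlastM] at hx
        have hx' : x = v := by simpa using hx.symm
        subst hx'
        exact hlink x (by rw [hlastM]; simp) y hy
  · rw [lw_decomp, lw_decomp]
    ring

lemma tail_nil {t : V} {c r₁ r₂ : List V} {u : V} {ρ₁ ρ₂ : List V}
    (e1 : ρ₁ = c ++ u :: r₁) (e2 : ρ₂ = c ++ u :: r₂)
    (hl1 : ρ₁.getLast? = some t) (hl2 : ρ₂.getLast? = some t)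
    (hn1 : ρ₁.Nodup) (h2 : r₂ = []) : r₁ = [] := by
  subst h2; subst e1; subst e2
  rw [List.getLast?_append_cons] at hl1 hl2
  have hu : u = t := by simpa using hl2
  rcases r₁ with _ | ⟨y, r⟩
  · rfl
  · exfalso
    have htm : t ∈ y :: r := by
      have hl1' : t ∈ (y :: r).getLast? := by
        rw [List.getLast?_cons_cons] at hl1; exact hl1
      obtain ⟨hh, rfl⟩ := List.mem_getLast?_eq_getLast hl1'
      exact List.getLast_mem hh
    have hsub : (u :: y :: r).Nodup := hn1.sublist (List.sublist_append_right c _)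
    exact (List.nodup_cons.1 hsub).1 (hu ▸ htm)

-- helper: t is a member of the tail
lemma getLast_mem_of_ne_nil {t : V} {r : List V} (h : r ≠ []) (hl : r.getLast? = some t) :
    t ∈ r := by
  obtain ⟨hh, rfl⟩ := List.mem_getLast?_eq_getLast (show t ∈ r.getLast? from hl)
  exact List.getLast_mem hh

theorem stmt8 (E : V → V → Prop) (w : V → V → ℤ) (s t : V) (ρ₁ ρ₂ : List V)
    (h1 : IsPath E ρ₁ s t) (h2 : IsPath E ρ₂ s t)
    (hn1 : ρ₁.Nodup) (hn2 : ρ₂.Nodup) (hne : ρ₁ ≠ ρ₂)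
    (hmin1 : ∀ ρ, IsPath E ρ s t → listWeight w ρ₁ ≤ listWeight w ρ)
    (hmin2 : ∀ ρ, IsPath E ρ s t → listWeight w ρ₂ ≤ listWeight w ρ) :
    ∃ (u v : V) (σ₁ σ₂ : List V),
      σ₁ <:+: ρ₁ ∧ σ₂ <:+: ρ₂ ∧
      IsPath E σ₁ u v ∧ IsPath E σ₂ u v ∧ σ₁ ≠ σ₂ ∧
      (∀ x ∈ σ₁, x ∈ σ₂ → x = u ∨ x = v) ∧
      listWeight w σ₁ = listWeight w σ₂ := by
  obtain ⟨hne1, hh1, hl1, hc1⟩ := h1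
  obtain ⟨hne2, hh2, hl2, hc2⟩ := h2
  obtain ⟨m₁, rfl⟩ : ∃ m, ρ₁ = s :: m := by
    cases ρ₁ with
    | nil => exact absurd rfl hne1
    | cons a l =>
      have ha : a = s := by simpa using hh1
      exact ⟨l, by rw [ha]⟩
  obtain ⟨m₂, rfl⟩ : ∃ m, ρ₂ = s :: m := by
    cases ρ₂ with
    | nil => exact absurd rfl hne2
    | cons a l =>
      have ha : a = s := by simpa using hh2
      exact ⟨l, by rw [ha]⟩
  have hm : m₁ ≠ m₂ := fun hh => hne (by rw [hh])
  obtain ⟨c, u, r₁, r₂, e1, e2, hhd⟩ := common_prefix m₁ s m₂ hm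
  have hr2 : r₂ ≠ [] := fun hh => hhd (by rw [tail_nil e1 e2 hl1 hl2 hn1 hh, hh])
  have hr1 : r₁ ≠ [] := fun hh => hhd (by rw [tail_nil e2 e1 hl2 hl1 hn2 hh, hh])
  have hlr1 : r₁.getLast? = some t := by
    rw [e1, List.getLast?_append_cons] at hl1
    rcases r₁ with _ | ⟨y, r⟩
    · exact absurd rfl hr1
    · rw [List.getLast?_cons_cons] at hl1; exact hl1
  have hlr2 : r₂.getLast? = some t := by
    rw [e2, List.getLast?_append_cons] at hl2
    rcases r₂ with _ | ⟨y, r⟩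
    · exact absurd rfl hr2
    · rw [List.getLast?_cons_cons] at hl2; exact hl2
  have ht1 : t ∈ r₁ := getLast_mem_of_ne_nil hr1 hlr1
  have ht2 : t ∈ r₂ := getLast_mem_of_ne_nil hr2 hlr2
  obtain ⟨a₁, v, b₁, er1, hv2, ha1⟩ := first_common r₁ ⟨t, ht1, ht2⟩
  obtain ⟨a₂, b₂, er2⟩ := List.append_of_mem hv2
  have E1 : s :: m₁ = c ++ u :: (a₁ ++ v :: b₁) := by rw [e1, er1]
  have E2 : s :: m₂ = c ++ u :: (a₂ ++ v :: b₂) := by rw [e2, er2]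
  refine ⟨u, v, u :: (a₁ ++ [v]), u :: (a₂ ++ [v]), ?_, ?_, ?_, ?_, ?_, ?_, ?_⟩
  · exact ⟨c, b₁, by rw [E1]; simp⟩
  · exact ⟨c, b₂, by rw [E2]; simp⟩
  · refine ⟨by simp, rfl, ?_, ?_⟩
    · show ((u :: a₁) ++ [v]).getLast? = some v
      exact List.getLast?_concat
    · exact hc1.infix ⟨c, b₁, by rw [E1]; simp⟩
  · refine ⟨by simp, rfl, ?_, ?_⟩
    · show ((u :: a₂) ++ [v]).getLast? = some v
      exact List.getLast?_concat
    · exact hc2.infix ⟨c, b₂, by rw [E2]; simp⟩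
  · intro heq
    have ha : a₁ ++ [v] = a₂ ++ [v] := by injection heq
    have ha' : a₁ = a₂ := by simpa using ha
    apply hhd
    rw [er1, er2, ← ha']
    cases a₁ <;> simp
  · intro x hx1 hx2
    rcases List.mem_cons.1 hx1 with rfl | hx1'
    · exact Or.inl rfl
    rcases List.mem_append.1 hx1' with hxa | hxv
    · rcases List.mem_cons.1 hx2 with rfl | hx2'
      · exact Or.inl rfl
      rcases List.mem_append.1 hx2' with hxa2 | hxv2
      · exact absurd (er2 ▸ List.mem_append.2 (Or.inl hxa2)) (ha1 x hxa)
      · exact Or.inr (by simpa using hxv2)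
    · exact Or.inr (by simpa using hxv)
  · -- weights
    have hch1 : (u :: (a₁ ++ [v])).Chain' E := hc1.infix ⟨c, b₁, by rw [E1]; simp⟩
    have hch2 : (u :: (a₂ ++ [v])).Chain' E := hc2.infix ⟨c, b₂, by rw [E2]; simp⟩
    have hP1 : IsPath E (s :: m₁) s t := ⟨hne1, hh1, hl1, hc1⟩
    have hP2 : IsPath E (s :: m₂) s t := ⟨hne2, hh2, hl2, hc2⟩
    have hS1 := splice E w c a₁ b₁ a₂ (E1 ▸ hP1) hch2
    have hS2 := splice E w c a₂ b₂ a₁ (E2 ▸ hP2) hch1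
    have hm1 := hmin1 _ hS1.1
    have hm2 := hmin2 _ hS2.1
    rw [E1] at hm1
    rw [E2] at hm2
    have w1 := hS1.2
    have w2 := hS2.2
    linarith
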